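/- Let H be a finite dimensional Hopf algebra over k acting on the Weyl algebra A = A_n(k). Then there exists a finitely generated subring R of k and a Hopf R-order H_R of H such that the action restricts to an action of H_R on A_R = A_n(R), i.e., H_R · A_R ⊆ A_R. -/

import Mathlib

open TensorProduct

/-- The defining relations of the `n`-th Weyl algebra: generators `xᵢ = .inl i`,
`yᵢ = .inr i`, relations `[xᵢ,xⱼ] = [yᵢ,yⱼ] = 0` and `[yᵢ,xⱼ] = δᵢⱼ`. -/
inductive WeylRel (R : Type) [CommRing R] (n : ℕ) :
    FreeAlgebra R (Fin n ⊕ Fin n) → FreeAlgebra R (Fin n ⊕ Fin n) → Prop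
  | xx (i j : Fin n) : WeylRel R n (FreeAlgebra.ι R (Sum.inl i) * FreeAlgebra.ι R (Sum.inl j))
      (FreeAlgebra.ι R (Sum.inl j) * FreeAlgebra.ι R (Sum.inl i))
  | yy (i j : Fin n) : WeylRel R n (FreeAlgebra.ι R (Sum.inr i) * FreeAlgebra.ι R (Sum.inr j))
      (FreeAlgebra.ι R (Sum.inr j) * FreeAlgebra.ι R (Sum.inr i))
  | yx (i j : Fin n) : WeylRel R n (FreeAlgebra.ι R (Sum.inr i) * FreeAlgebra.ι R (Sum.inl j))
      (FreeAlgebra.ι R (Sum.inl j) * FreeAlgebra.ι R (Sum.inr i) + if i = j then 1 else 0)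

/-- The `n`-th Weyl algebra `A_n(R)` over a commutative ring `R`. -/
def WeylAlgebra (R : Type) [CommRing R] (n : ℕ) : Type := RingQuot (WeylRel R n)

noncomputable instance (R : Type) [CommRing R] (n : ℕ) : Ring (WeylAlgebra R n) :=
  inferInstanceAs (Ring (RingQuot (WeylRel R n)))

noncomputable instance (S R : Type) [CommSemiring S] [CommRing R] [Algebra S R] (n : ℕ) :
    Algebra S (WeylAlgebra R n) :=
  inferInstanceAs (Algebra S (RingQuot (WeylRel R n)))

namespace WeylAlgebra

/-- The generator `xᵢ` of the Weyl algebra. -/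
noncomputable def X {R : Type} [CommRing R] {n : ℕ} (i : Fin n) : WeylAlgebra R n :=
  RingQuot.mkRingHom (WeylRel R n) (FreeAlgebra.ι R (Sum.inl i))

/-- The generator `yᵢ` of the Weyl algebra. -/
noncomputable def Y {R : Type} [CommRing R] {n : ℕ} (i : Fin n) : WeylAlgebra R n :=
  RingQuot.mkRingHom (WeylRel R n) (FreeAlgebra.ι R (Sum.inr i))

end WeylAlgebra

/-- An action of a (bi/Hopf) algebra `H` on an algebra `A`, where the comultiplication and
counit of `H` are supplied explicitly as `comul` and `counit`.  This says exactly that `A`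
is an `H`-module algebra:  `h ⬝ (ab) = ∑ (h₁ ⬝ a)(h₂ ⬝ b)` and `h ⬝ 1 = ε(h) 1`. -/
structure ModAlgAction (k : Type) [CommRing k] (H : Type) [Ring H] [Module k H]
    (comul : H →ₗ[k] H ⊗[k] H) (counit : H →ₗ[k] k)
    (A : Type) [Ring A] [Algebra k A] where
  /-- the action map -/
  act : H →ₗ[k] A →ₗ[k] A
  one_act : ∀ a : A, act 1 a = a
  mul_act : ∀ (g h : H) (a : A), act (g * h) a = act g (act h a)
  act_one : ∀ h : H, act h 1 = algebraMap k A (counit h)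
  act_mul : ∀ (h : H) (a b : A), act h (a * b) =
    TensorProduct.lift (((LinearMap.mul k A).comp (act.flip a)).compl₂ (act.flip b)) (comul h)

/-- An action of a Hopf algebra `H` on an algebra `A`, i.e. an `H`-module algebra
structure on `A`. -/
abbrev HopfAction (k : Type) [CommRing k] (H : Type) [Ring H] [Bialgebra k H]
    (A : Type) [Ring A] [Algebra k A] :=
  ModAlgAction k H (Coalgebra.comul (R := k)) (Coalgebra.counit (R := k)) A

/-- The `k`-subspace `I ⊗ H + H ⊗ I` of `H ⊗ H` determined by a subspace `I ⊆ H`. -/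
noncomputable def tensorIdeal (k : Type) [CommRing k] (H : Type) [Ring H] [Module k H]
    (I : Submodule k H) : Submodule k (H ⊗[k] H) :=
  Submodule.span k {z : H ⊗[k] H |
    (∃ a ∈ I, ∃ b : H, z = a ⊗ₜ[k] b) ∨ (∃ a : H, ∃ b ∈ I, z = a ⊗ₜ[k] b)}

/-- A (two-sided) Hopf ideal of `H`, with respect to explicitly supplied comultiplication,
counit and antipode. -/
def IsHopfIdealWith (k : Type) [CommRing k] (H : Type) [Ring H] [Module k H]
    (comul : H →ₗ[k] H ⊗[k] H) (counit : H →ₗ[k] k) (antipode : H →ₗ[k] H)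
    (I : Submodule k H) : Prop :=
  (∀ x ∈ I, ∀ h : H, h * x ∈ I ∧ x * h ∈ I) ∧
  (∀ x ∈ I, comul x ∈ tensorIdeal k H I) ∧
  (∀ x ∈ I, counit x = 0) ∧
  (∀ x ∈ I, antipode x ∈ I)

/-- A Hopf ideal of a Hopf algebra `H`. -/
abbrev IsHopfIdeal (k : Type) [CommRing k] (H : Type) [Ring H] [HopfAlgebra k H]
    (I : Submodule k H) : Prop :=
  IsHopfIdealWith k H (Coalgebra.comul (R := k)) (Coalgebra.counit (R := k))
    (HopfAlgebra.antipode (R := k)) I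

/-- Inner faithfulness of an action map `act`: no nonzero Hopf ideal annihilates `A`. -/
def InnerFaithfulWith (k : Type) [CommRing k] (H : Type) [Ring H] [Module k H]
    (comul : H →ₗ[k] H ⊗[k] H) (counit : H →ₗ[k] k) (antipode : H →ₗ[k] H)
    (A : Type) [Ring A] [Algebra k A] (act : H →ₗ[k] A →ₗ[k] A) : Prop :=
  ∀ I : Submodule k H, IsHopfIdealWith k H comul counit antipode I →
    (∀ x ∈ I, ∀ a : A, act x a = 0) → I = ⊥

/-- Inner faithfulness of a Hopf algebra action: no nonzero Hopf ideal of `H` acts by zero. -/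
abbrev HopfAction.InnerFaithful {k : Type} [CommRing k] {H : Type} [Ring H] [HopfAlgebra k H]
    {A : Type} [Ring A] [Algebra k A] (ha : HopfAction k H A) : Prop :=
  InnerFaithfulWith k H (Coalgebra.comul (R := k)) (Coalgebra.counit (R := k))
    (HopfAlgebra.antipode (R := k)) A ha.act

/-- The set of invariants of an action. -/
def ModAlgAction.invariants {k : Type} [CommRing k] {H : Type} [Ring H] [Module k H]
    {comul : H →ₗ[k] H ⊗[k] H} {counit : H →ₗ[k] k}
    {A : Type} [Ring A] [Algebra k A] (ha : ModAlgAction k H comul counit A) : Set A :=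
  {a : A | ∀ h : H, ha.act h a = counit h • a}

/-- The kernel of an action, as a subspace of `H`. -/
noncomputable def ModAlgAction.actionKernel {k : Type} [CommRing k] {H : Type} [Ring H]
    [Module k H] {comul : H →ₗ[k] H ⊗[k] H} {counit : H →ₗ[k] k}
    {A : Type} [Ring A] [Algebra k A] (ha : ModAlgAction k H comul counit A) :
    Submodule k H :=
  ⨅ a : A, LinearMap.ker (ha.act.flip a)


section WeylAux

variable (k : Type) [Field k] (n : ℕ)

/-- The subring of the Weyl algebra generated by scalars from `R` and the generators. -/
noncomputable def weylSub (R : Subring k) : Subring (WeylAlgebra k n) :=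
  Subring.closure ((algebraMap k (WeylAlgebra k n) '' R) ∪
    Set.range (WeylAlgebra.X (R := k) (n := n)) ∪
    Set.range (WeylAlgebra.Y (R := k) (n := n)))

lemma weylSub_mono {R₁ R₂ : Subring k} (h : R₁ ≤ R₂) : weylSub k n R₁ ≤ weylSub k n R₂ :=
  Subring.closure_mono (by
    apply Set.union_subset_union_left
    apply Set.union_subset_union_left
    exact Set.image_mono h)

lemma algebraMap_mem_weylSub (R : Subring k) {r : k} (hr : r ∈ R) :
    algebraMap k (WeylAlgebra k n) r ∈ weylSub k n R :=
  Subring.subset_closure (Or.inl (Or.inl ⟨r, hr, rfl⟩))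

lemma X_mem_weylSub (R : Subring k) (i : Fin n) :
    WeylAlgebra.X (R := k) i ∈ weylSub k n R :=
  Subring.subset_closure (Or.inl (Or.inr ⟨i, rfl⟩))

lemma Y_mem_weylSub (R : Subring k) (i : Fin n) :
    WeylAlgebra.Y (R := k) i ∈ weylSub k n R :=
  Subring.subset_closure (Or.inr ⟨i, rfl⟩)

lemma smul_mem_weylSub (R : Subring k) {r : k} (hr : r ∈ R) {a : WeylAlgebra k n}
    (haa : a ∈ weylSub k n R) : r • a ∈ weylSub k n R := by
  rw [Algebra.smul_def]
  exact (weylSub k n R).mul_mem (algebraMap_mem_weylSub k n R hr) haa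

lemma weylAlgebra_adjoin_eq_top :
    Algebra.adjoin k (Set.range (WeylAlgebra.X (R := k) (n := n)) ∪
      Set.range (WeylAlgebra.Y (R := k) (n := n))) = ⊤ := by
  rw [eq_top_iff]
  rintro a -
  obtain ⟨w, rfl⟩ := RingQuot.mkAlgHom_surjective k (WeylRel k n) a
  have hw : w ∈ Algebra.adjoin k (Set.range (FreeAlgebra.ι k (X := Fin n ⊕ Fin n))) := by
    rw [FreeAlgebra.adjoin_range_ι]; trivial
  induction hw using Algebra.adjoin_induction with
  | mem x hx =>
    obtain ⟨v, rfl⟩ := hx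
    apply Algebra.subset_adjoin
    rcases v with i | i
    · left
      exact ⟨i, by rw [WeylAlgebra.X, ← RingQuot.mkAlgHom_coe k (WeylRel k n)]; rfl⟩
    · right
      exact ⟨i, by rw [WeylAlgebra.Y, ← RingQuot.mkAlgHom_coe k (WeylRel k n)]; rfl⟩
  | algebraMap r => rw [AlgHom.commutes]; exact Subalgebra.algebraMap_mem _ r
  | add x y hx hy ihx ihy => rw [map_add]; exact add_mem ihx ihy
  | mul x y hx hy ihx ihy => rw [map_mul]; exact mul_mem ihx ihy

lemma exists_finset_mem_weylSub (a : WeylAlgebra k n) :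
    ∃ s : Finset k, a ∈ weylSub k n (Subring.closure (s : Set k)) := by
  classical
  have ha : a ∈ Algebra.adjoin k (Set.range (WeylAlgebra.X (R := k) (n := n)) ∪
      Set.range (WeylAlgebra.Y (R := k) (n := n))) := by
    rw [weylAlgebra_adjoin_eq_top]; trivial
  induction ha using Algebra.adjoin_induction with
  | mem x hx =>
    refine ⟨∅, Subring.subset_closure ?_⟩
    rcases hx with hx | hx
    · exact Or.inl (Or.inr hx)
    · exact Or.inr hx
  | algebraMap r =>
    exact ⟨{r}, algebraMap_mem_weylSub k n _ (Subring.subset_closure (by simp))⟩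
  | add x y hx hy ihx ihy =>
    obtain ⟨s, hs⟩ := ihx
    obtain ⟨t, ht⟩ := ihy
    refine ⟨s ∪ t, add_mem ?_ ?_⟩
    · exact weylSub_mono k n (Subring.closure_mono (by simp [Set.subset_def]; tauto)) hs
    · exact weylSub_mono k n (Subring.closure_mono (by simp [Set.subset_def]; tauto)) ht
  | mul x y hx hy ihx ihy =>
    obtain ⟨s, hs⟩ := ihx
    obtain ⟨t, ht⟩ := ihy
    refine ⟨s ∪ t, mul_mem ?_ ?_⟩
    · exact weylSub_mono k n (Subring.closure_mono (by simp [Set.subset_def]; tauto)) hs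
    · exact weylSub_mono k n (Subring.closure_mono (by simp [Set.subset_def]; tauto)) ht

end WeylAux

set_option maxHeartbeats 2000000
set_option synthInstance.maxHeartbeats 400000

/-- Let `H` be a finite dimensional Hopf algebra over `k` acting on the Weyl algebra
`A = A_n(k)`.  Then there is a finitely generated subring `R ⊆ k` and a Hopf `R`-order
`H_R` of `H` (a finitely generated projective `R`-submodule with `H_R ⊗[R] k ≅ H`,
containing `1`, closed under multiplication, comultiplication, counit and antipode)
such that the action restricts to an action of `H_R` on `A_R = A_n(R)`. -/
theorem exists_hopf_order_with_restricted_action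
    (k : Type) [Field k] [IsAlgClosed k] [CharZero k]
    (H : Type) [Ring H] [HopfAlgebra k H] [FiniteDimensional k H]
    (n : ℕ) (ha : HopfAction k H (WeylAlgebra k n)) :
    ∃ R : Subring k, (∃ s : Finset k, Subring.closure (s : Set k) = R) ∧
      ∃ HR : Submodule R H,
        Module.Finite R HR ∧
        Module.Projective R HR ∧
        Function.Bijective (LinearMap.liftBaseChange k HR.subtype) ∧
        (1 : H) ∈ HR ∧
        (∀ x ∈ HR, ∀ y ∈ HR, x * y ∈ HR) ∧
        (∀ x ∈ HR, Coalgebra.comul (R := k) x ∈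
          Submodule.span R {z : H ⊗[k] H | ∃ a ∈ HR, ∃ b ∈ HR, z = a ⊗ₜ[k] b}) ∧
        (∀ x ∈ HR, Coalgebra.counit (R := k) x ∈ R) ∧
        (∀ x ∈ HR, HopfAlgebra.antipode (R := k) x ∈ HR) ∧
        (∀ x ∈ HR, ∀ a ∈ Subring.closure
            ((algebraMap k (WeylAlgebra k n) '' R) ∪
              Set.range (WeylAlgebra.X (R := k) (n := n)) ∪
              Set.range (WeylAlgebra.Y (R := k) (n := n))),
          ha.act x a ∈ Subring.closure
            ((algebraMap k (WeylAlgebra k n) '' R) ∪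
              Set.range (WeylAlgebra.X (R := k) (n := n)) ∪
              Set.range (WeylAlgebra.Y (R := k) (n := n)))) := by
  classical
  let d := Module.finrank k H
  let b : Module.Basis (Fin d) k H := Module.finBasis k H
  let bb : Module.Basis (Fin d × Fin d) k (H ⊗[k] H) := b.tensorProduct b
  choose sX hsX using fun (i : Fin d) (j : Fin n) =>
    exists_finset_mem_weylSub k n (ha.act (b i) (WeylAlgebra.X j))
  choose sY hsY using fun (i : Fin d) (j : Fin n) =>
    exists_finset_mem_weylSub k n (ha.act (b i) (WeylAlgebra.Y j))
  set s : Finset k :=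
    ((Finset.univ : Finset (Fin d × Fin d × Fin d)).image
        fun p => b.repr (b p.1 * b p.2.1) p.2.2) ∪
    ((Finset.univ : Finset (Fin d)).image fun l => b.repr 1 l) ∪
    ((Finset.univ : Finset (Fin d × Fin d × Fin d)).image
        fun p => bb.repr (Coalgebra.comul (R := k) (b p.1)) (p.2.1, p.2.2)) ∪
    ((Finset.univ : Finset (Fin d)).image fun i => Coalgebra.counit (R := k) (b i)) ∪
    ((Finset.univ : Finset (Fin d × Fin d)).image
        fun p => b.repr (HopfAlgebra.antipode (R := k) (b p.1)) p.2) ∪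
    ((Finset.univ : Finset (Fin d × Fin n)).biUnion fun p => sX p.1 p.2) ∪
    ((Finset.univ : Finset (Fin d × Fin n)).biUnion fun p => sY p.1 p.2) with hs
  set R : Subring k := Subring.closure (s : Set k) with hR
  have hmem : ∀ {x : k}, x ∈ s → x ∈ R := fun hx => Subring.subset_closure hx
  have hμ : ∀ i j l : Fin d, b.repr (b i * b j) l ∈ R := fun i j l => hmem (by
    rw [hs]
    exact Finset.mem_union_left _ (Finset.mem_union_left _ (Finset.mem_union_left _
      (Finset.mem_union_left _ (Finset.mem_union_left _ (Finset.mem_union_left _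
        (Finset.mem_image.mpr ⟨(i, j, l), Finset.mem_univ _, rfl⟩)))))))
  have h1coef : ∀ l : Fin d, b.repr 1 l ∈ R := fun l => hmem (by
    rw [hs]
    exact Finset.mem_union_left _ (Finset.mem_union_left _ (Finset.mem_union_left _
      (Finset.mem_union_left _ (Finset.mem_union_left _ (Finset.mem_union_right _
        (Finset.mem_image.mpr ⟨l, Finset.mem_univ _, rfl⟩)))))))
  have hν : ∀ (i l m : Fin d), bb.repr (Coalgebra.comul (R := k) (b i)) (l, m) ∈ R :=
    fun i l m => hmem (by
      rw [hs]
      exact Finset.mem_union_left _ (Finset.mem_union_left _ (Finset.mem_union_left _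
        (Finset.mem_union_left _ (Finset.mem_union_right _
          (Finset.mem_image.mpr ⟨(i, l, m), Finset.mem_univ _, rfl⟩))))))
  have hε : ∀ i : Fin d, Coalgebra.counit (R := k) (b i) ∈ R := fun i => hmem (by
    rw [hs]
    exact Finset.mem_union_left _ (Finset.mem_union_left _ (Finset.mem_union_left _
      (Finset.mem_union_right _ (Finset.mem_image.mpr ⟨i, Finset.mem_univ _, rfl⟩)))))
  have hσ : ∀ (i l : Fin d), b.repr (HopfAlgebra.antipode (R := k) (b i)) l ∈ R :=
    fun i l => hmem (by
      rw [hs]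
      exact Finset.mem_union_left _ (Finset.mem_union_left _ (Finset.mem_union_right _
        (Finset.mem_image.mpr ⟨(i, l), Finset.mem_univ _, rfl⟩))))
  have hsXR : ∀ (i : Fin d) (j : Fin n), Subring.closure ((sX i j : Set k)) ≤ R := by
    intro i j
    refine Subring.closure_le.mpr fun c hc => hmem ?_
    rw [hs]
    exact Finset.mem_union_left _ (Finset.mem_union_right _
      (Finset.mem_biUnion.mpr ⟨(i, j), Finset.mem_univ _, hc⟩))
  have hsYR : ∀ (i : Fin d) (j : Fin n), Subring.closure ((sY i j : Set k)) ≤ R := by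
    intro i j
    refine Subring.closure_le.mpr fun c hc => hmem ?_
    rw [hs]
    exact Finset.mem_union_right _ (Finset.mem_biUnion.mpr ⟨(i, j), Finset.mem_univ _, hc⟩)
  -- the order
  have lib : LinearIndependent R (fun i : Fin d => b i) := by
    refine b.linearIndependent.restrict_scalars ?_
    intro r r' hrr
    apply Subtype.ext
    simpa [Subring.smul_def] using hrr
  set HR : Submodule R H := Submodule.span R (Set.range fun i : Fin d => b i) with hHR
  let bR : Module.Basis (Fin d) R HR := Module.Basis.span lib
  have hbmem : ∀ i, b i ∈ HR := fun i => Submodule.subset_span ⟨i, rfl⟩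
  have hsmul : ∀ (c : k), c ∈ R → ∀ v ∈ HR, c • v ∈ HR := fun c hc v hv => by
    have := HR.smul_mem (⟨c, hc⟩ : R) hv
    rwa [Subring.smul_def] at this
  -- bijectivity of base change
  have hbij : Function.Bijective (LinearMap.liftBaseChange k HR.subtype) := by
    set L := LinearMap.liftBaseChange k HR.subtype with hL
    let u : Fin d → k ⊗[R] ↥HR := fun i => (1 : k) ⊗ₜ[R] (⟨b i, hbmem i⟩ : HR)
    have hLu : ∀ (c : k) (i : Fin d), L (c • u i) = c • b i := fun c i => by
      rw [map_smul, hL, LinearMap.liftBaseChange_tmul]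
      simp [u]
    have key : ∀ (v : H) (hv : v ∈ HR) (c : k),
        c ⊗ₜ[R] (⟨v, hv⟩ : HR) ∈ Submodule.span k (Set.range u) := by
      intro v hv
      induction hv using Submodule.span_induction with
      | mem v hv =>
        obtain ⟨i, rfl⟩ := hv
        intro c
        have : c ⊗ₜ[R] (⟨b i, Submodule.subset_span ⟨i, rfl⟩⟩ : HR) = c • u i := by
          rw [TensorProduct.smul_tmul']
          simp [u]
        rw [this]
        exact Submodule.smul_mem _ _ (Submodule.subset_span ⟨i, rfl⟩)
      | zero =>
        intro c
        have : (⟨(0 : H), Submodule.zero_mem HR⟩ : HR) = 0 := rfl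
        rw [this, TensorProduct.tmul_zero]
        exact Submodule.zero_mem _
      | add x y hx hy ihx ihy =>
        intro c
        have : (⟨x + y, add_mem hx hy⟩ : HR) = ⟨x, hx⟩ + ⟨y, hy⟩ := rfl
        rw [this, TensorProduct.tmul_add]
        exact add_mem (ihx c) (ihy c)
      | smul r x hx ih =>
        intro c
        have h1 : (⟨r • x, Submodule.smul_mem HR r hx⟩ : HR) = r • (⟨x, hx⟩ : HR) := rfl
        have h2 : c ⊗ₜ[R] (r • (⟨x, hx⟩ : HR)) = (r • c) ⊗ₜ[R] (⟨x, hx⟩ : HR) :=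
          (TensorProduct.smul_tmul r c _).symm
        rw [h1, h2]
        exact ih (r • c)
    have hspan : ∀ z : k ⊗[R] ↥HR, z ∈ Submodule.span k (Set.range u) := by
      intro z
      induction z using TensorProduct.induction_on with
      | zero => exact Submodule.zero_mem _
      | tmul c x => exact key x.1 x.2 c
      | add x y hx hy => exact add_mem hx hy
    constructor
    · intro z w hzw
      have h0 : L (z - w) = 0 := by rw [map_sub, hzw, sub_self]
      obtain ⟨c, hc⟩ := (Submodule.mem_span_range_iff_exists_fun k).mp (hspan (z - w))
      have hcb : ∑ i, c i • b i = 0 := by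
        have := congrArg L hc
        rw [map_sum, h0] at this
        rw [← this]
        exact Finset.sum_congr rfl fun i _ => (hLu (c i) i).symm
      have hc0 : ∀ i, c i = 0 := Fintype.linearIndependent_iff.mp b.linearIndependent c hcb
      have : z - w = 0 := by
        rw [← hc]
        simp [hc0]
      exact sub_eq_zero.mp this
    · intro v
      refine ⟨∑ i, (b.repr v i) • u i, ?_⟩
      rw [map_sum]
      calc ∑ i, L ((b.repr v i) • u i) = ∑ i, (b.repr v i) • b i :=
            Finset.sum_congr rfl fun i _ => hLu _ i
        _ = v := b.sum_repr v
  -- 1 ∈ HR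
  have h1 : (1 : H) ∈ HR := by
    rw [← b.sum_repr 1]
    exact Submodule.sum_mem _ fun l _ => hsmul _ (h1coef l) _ (hbmem l)
  -- multiplicative closure
  have hbmul : ∀ i j, b i * b j ∈ HR := fun i j => by
    rw [← b.sum_repr (b i * b j)]
    exact Submodule.sum_mem _ fun l _ => hsmul _ (hμ i j l) _ (hbmem l)
  have hmulc : ∀ x ∈ HR, ∀ y ∈ HR, x * y ∈ HR := by
    intro x hx
    induction hx using Submodule.span_induction with
    | mem v hv =>
      obtain ⟨i, rfl⟩ := hv
      intro y hy
      induction hy using Submodule.span_induction with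
      | mem w hw => obtain ⟨j, rfl⟩ := hw; exact hbmul i j
      | zero => rw [mul_zero]; exact Submodule.zero_mem _
      | add p q hp hq ihp ihq => rw [mul_add]; exact add_mem ihp ihq
      | smul r y hy ihy =>
        rw [Subring.smul_def, mul_smul_comm]
        exact hsmul _ r.2 _ ihy
    | zero => intro y hy; rw [zero_mul]; exact Submodule.zero_mem _
    | add p q hp hq ihp ihq =>
      intro y hy
      rw [add_mul]
      exact add_mem (ihp y hy) (ihq y hy)
    | smul r x hx ih =>
      intro y hy
      rw [Subring.smul_def, smul_mul_assoc]
      exact hsmul _ r.2 _ (ih y hy)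
  -- comultiplication
  set T : Submodule R (H ⊗[k] H) :=
    Submodule.span R {z : H ⊗[k] H | ∃ a ∈ HR, ∃ b ∈ HR, z = a ⊗ₜ[k] b} with hT
  have hTsmul : ∀ (c : k), c ∈ R → ∀ z ∈ T, c • z ∈ T := fun c hc z hz => by
    have := T.smul_mem (⟨c, hc⟩ : R) hz
    exact this
  have hcomulb : ∀ i, Coalgebra.comul (R := k) (b i) ∈ T := fun i => by
    rw [← bb.sum_repr (Coalgebra.comul (R := k) (b i))]
    refine Submodule.sum_mem _ fun p _ => ?_
    have hbbp : bb p = b p.1 ⊗ₜ[k] b p.2 := Module.Basis.tensorProduct_apply b b p.1 p.2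
    rw [hbbp]
    exact hTsmul _ (hν i p.1 p.2) _
      (Submodule.subset_span ⟨b p.1, hbmem p.1, b p.2, hbmem p.2, rfl⟩)
  have hcomul : ∀ x ∈ HR, Coalgebra.comul (R := k) x ∈ T := by
    intro x hx
    induction hx using Submodule.span_induction with
    | mem v hv => obtain ⟨i, rfl⟩ := hv; exact hcomulb i
    | zero => rw [map_zero]; exact Submodule.zero_mem _
    | add p q hp hq ihp ihq => rw [map_add]; exact add_mem ihp ihq
    | smul r x hx ih =>
      rw [Subring.smul_def, map_smul]
      exact hTsmul _ r.2 _ ih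
  -- counit
  have hcounit : ∀ x ∈ HR, Coalgebra.counit (R := k) x ∈ R := by
    intro x hx
    induction hx using Submodule.span_induction with
    | mem v hv => obtain ⟨i, rfl⟩ := hv; exact hε i
    | zero => rw [map_zero]; exact R.zero_mem
    | add p q hp hq ihp ihq => rw [map_add]; exact R.add_mem ihp ihq
    | smul r x hx ih =>
      rw [Subring.smul_def, map_smul, smul_eq_mul]
      exact R.mul_mem r.2 ih
  -- antipode
  have hanti_b : ∀ i, HopfAlgebra.antipode (R := k) (b i) ∈ HR := fun i => by
    rw [← b.sum_repr (HopfAlgebra.antipode (R := k) (b i))]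
    exact Submodule.sum_mem _ fun l _ => hsmul _ (hσ i l) _ (hbmem l)
  have hanti : ∀ x ∈ HR, HopfAlgebra.antipode (R := k) x ∈ HR := by
    intro x hx
    induction hx using Submodule.span_induction with
    | mem v hv => obtain ⟨i, rfl⟩ := hv; exact hanti_b i
    | zero => rw [map_zero]; exact Submodule.zero_mem _
    | add p q hp hq ihp ihq => rw [map_add]; exact add_mem ihp ihq
    | smul r x hx ih =>
      rw [Subring.smul_def, map_smul]
      exact hsmul _ r.2 _ ih
  -- the action restricts
  have hact_b : ∀ a ∈ weylSub k n R, ∀ i : Fin d, ha.act (b i) a ∈ weylSub k n R := by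
    intro a haa
    induction haa using Subring.closure_induction with
    | mem x hx =>
      intro i
      rcases hx with (⟨r, hr, rfl⟩ | ⟨j, rfl⟩) | ⟨j, rfl⟩
      · rw [Algebra.algebraMap_eq_smul_one, map_smul, ha.act_one]
        exact smul_mem_weylSub k n R hr (algebraMap_mem_weylSub k n R (hε i))
      · exact weylSub_mono k n (hsXR i j) (hsX i j)
      · exact weylSub_mono k n (hsYR i j) (hsY i j)
    | zero => intro i; rw [map_zero]; exact Subring.zero_mem _
    | one =>
      intro i
      rw [ha.act_one]
      exact algebraMap_mem_weylSub k n R (hε i)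
    | add x y hx hy ihx ihy =>
      intro i
      rw [map_add]
      exact Subring.add_mem _ (ihx i) (ihy i)
    | neg x hx ih =>
      intro i
      rw [map_neg]
      exact Subring.neg_mem _ (ih i)
    | mul x y hx hy ihx ihy =>
      intro i
      rw [ha.act_mul, ← bb.sum_repr (Coalgebra.comul (R := k) (b i)), map_sum]
      refine Subring.sum_mem _ fun p _ => ?_
      rw [map_smul]
      refine smul_mem_weylSub k n R (hν i p.1 p.2) ?_
      have hbbp : bb p = b p.1 ⊗ₜ[k] b p.2 := Module.Basis.tensorProduct_apply b b p.1 p.2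
      rw [hbbp, TensorProduct.lift.tmul]
      simp only [LinearMap.compl₂_apply, LinearMap.comp_apply, LinearMap.flip_apply,
        LinearMap.mul_apply']
      exact Subring.mul_mem _ (ihx p.1) (ihy p.2)
  have hact : ∀ x ∈ HR, ∀ a ∈ weylSub k n R, ha.act x a ∈ weylSub k n R := by
    intro x hx
    induction hx using Submodule.span_induction with
    | mem v hv =>
      obtain ⟨i, rfl⟩ := hv
      exact fun a haa => hact_b a haa i
    | zero =>
      intro a haa
      rw [map_zero, LinearMap.zero_apply]
      exact Subring.zero_mem _
    | add p q hp hq ihp ihq =>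
      intro a haa
      rw [map_add, LinearMap.add_apply]
      exact Subring.add_mem _ (ihp a haa) (ihq a haa)
    | smul r x hx ih =>
      intro a haa
      rw [Subring.smul_def, map_smul, LinearMap.smul_apply]
      exact smul_mem_weylSub k n R r.2 (ih a haa)
  exact ⟨R, ⟨s, hR.symm⟩, HR, Module.Finite.of_basis bR, Module.Projective.of_basis bR,
    hbij, h1, hmulc, hcomul, hcounit, hanti, hact⟩
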